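/- arXiv:2601.10840 — 8 statements merged into one kernel-verified Lean document; each statement's English description precedes it below -/
import Mathlib

section
/- Let G = (V,E) be a TiRS digraph (a reflexive digraph satisfying (S), (R), (Ti)). Then G satisfies weak antisymmetry: for all x, y in V, if xE ⊆ yE and Ex ⊆ Ey, then x = y. -/
/-- Weak antisymmetry of TiRS digraphs: if `xE ⊆ yE` and `Ex ⊆ Ey` then `x = y`. -/
theorem tirs_weak_antisymmetry {V : Type*} (E : V → V → Prop)
    (hrefl : ∀ x : V, E x x)
    (hS : ∀ x y : V, x ≠ y → {z | E x z} ≠ {z | E y z} ∨ {z | E z x} ≠ {z | E z y})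
    (hR1 : ∀ x y : V, {z | E x z} ⊂ {z | E y z} → ¬ E x y)
    (hR2 : ∀ x y : V, {z | E z x} ⊂ {z | E z y} → ¬ E y x)
    (hTi : ∀ x y : V, E x y → ∃ z : V, {w | E z w} ⊆ {w | E x w} ∧ {w | E w z} ⊆ {w | E w y}) :
    ∀ x y : V, {z | E x z} ⊆ {z | E y z} → {z | E z x} ⊆ {z | E z y} → x = y := by
  intro x y h1 h2
  by_contra hne
  have hExy : E x y := h2 (hrefl x)
  have hEyx : E y x := h1 (hrefl x)
  rcases hS x y hne with h | h
  · exact hR1 x y (HasSubset.Subset.ssubset_of_ne h1 h) hExy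
  · exact hR2 x y (HasSubset.Subset.ssubset_of_ne h2 h) hEyx
end

section
/- Let L be an ortholattice, f : L → {0,1} a maximal partial homomorphism (MPH) of the lattice reduct of L into the two-element bounded lattice. Define the partial map g(f) by g(f)(a) = 0 if f(a') = 1 and g(f)(a) = 1 if f(a') = 0. Then g(f) is again a maximal partial homomorphism from L to {0,1}. -/
/-- A (lattice) filter: nonempty, up-closed, closed under meets. -/
def IsLatFilter {L : Type*} [Lattice L] (F : Set L) : Prop :=
  F.Nonempty ∧ (∀ a b : L, a ∈ F → a ≤ b → b ∈ F) ∧ (∀ a b : L, a ∈ F → b ∈ F → a ⊓ b ∈ F)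

/-- A (lattice) ideal: nonempty, down-closed, closed under joins. -/
def IsLatIdeal {L : Type*} [Lattice L] (I : Set L) : Prop :=
  I.Nonempty ∧ (∀ a b : L, a ∈ I → b ≤ a → b ∈ I) ∧ (∀ a b : L, a ∈ I → b ∈ I → a ⊔ b ∈ I)

/-- A maximal disjoint filter-ideal pair. -/
def IsMDFIP {L : Type*} [Lattice L] (F I : Set L) : Prop :=
  IsLatFilter F ∧ IsLatIdeal I ∧ F ∩ I = ∅ ∧
  ∀ G J : Set L, IsLatFilter G → IsLatIdeal J → G ∩ J = ∅ → F ⊆ G → I ⊆ J → G = F ∧ J = I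

/-- An orthocomplementation on a bounded lattice. -/
def IsOrtho {L : Type*} [Lattice L] [BoundedOrder L] (oc : L → L) : Prop :=
  (∀ a : L, oc (oc a) = a) ∧ (∀ a : L, a ⊓ oc a = ⊥) ∧ (∀ a : L, a ⊔ oc a = ⊤) ∧
  (∀ a b : L, oc (a ⊓ b) = oc a ⊔ oc b) ∧ (∀ a b : L, oc (a ⊔ b) = oc a ⊓ oc b)

/-- A partial (0,1)-lattice homomorphism into the two-element lattice `Bool`,
represented as a map into `Option Bool` (`none` = undefined). -/
def IsPartialHom {L : Type*} [Lattice L] [BoundedOrder L] (f : L → Option Bool) : Prop :=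
  f ⊤ = some true ∧ f ⊥ = some false ∧
  (∀ a b : L, ∀ x y : Bool, f a = some x → f b = some y →
    f (a ⊓ b) = some (x && y) ∧ f (a ⊔ b) = some (x || y))

/-- A maximal partial homomorphism (MPH): admits no proper partial-hom extension. -/
def IsMPH {L : Type*} [Lattice L] [BoundedOrder L] (f : L → Option Bool) : Prop :=
  IsPartialHom f ∧
  ∀ h : L → Option Bool, IsPartialHom h → (∀ a : L, ∀ b : Bool, f a = some b → h a = some b) → h = f

/-- The Ploščica relation on partial maps: `x⁻¹(1) ∩ y⁻¹(0) = ∅`. -/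
def Erel {L : Type*} (x y : L → Option Bool) : Prop :=
  ∀ a : L, ¬ (x a = some true ∧ y a = some false)

/-- The dual map `g` representing the orthocomplement: `g(f)(a) = 1` iff `f(a') = 0`. -/
def gmap {L : Type*} (oc : L → L) (f : L → Option Bool) : L → Option Bool :=
  fun a => Option.map (fun b => !b) (f (oc a))

lemma gmap_eq_some {L : Type*} (oc : L → L) (f : L → Option Bool) (a : L) (b : Bool) :
    gmap oc f a = some b ↔ f (oc a) = some (!b) := by
  unfold gmap
  cases h : f (oc a) with
  | none => simp
  | some c => cases b <;> cases c <;> simp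

lemma gmap_hom {L : Type*} [Lattice L] [BoundedOrder L] (oc : L → L)
    (hoc : IsOrtho oc) (f : L → Option Bool) (hf : IsPartialHom f) :
    IsPartialHom (gmap oc f) := by
  obtain ⟨hinv, hbot, htop, hmeet, hjoin⟩ := hoc
  obtain ⟨ft, fb, fmj⟩ := hf
  have octop : oc (⊤ : L) = ⊥ := by
    have := hbot ⊤; simpa using this
  have ocbot : oc (⊥ : L) = ⊤ := by
    have := htop ⊥; simpa using this
  refine ⟨?_, ?_, ?_⟩
  · rw [gmap_eq_some, octop]; simpa using fb
  · rw [gmap_eq_some, ocbot]; simpa using ft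
  · intro a b x y ha hb
    rw [gmap_eq_some] at ha hb
    have h1 := fmj (oc a) (oc b) (!x) (!y) ha hb
    constructor
    · rw [gmap_eq_some, hmeet]
      rw [h1.2]
      cases x <;> cases y <;> rfl
    · rw [gmap_eq_some, hjoin]
      rw [h1.1]
      cases x <;> cases y <;> rfl

lemma gmap_gmap {L : Type*} (oc : L → L) (hinv : ∀ a : L, oc (oc a) = a)
    (f : L → Option Bool) : gmap oc (gmap oc f) = f := by
  funext a
  unfold gmap
  rw [hinv]
  cases f a with
  | none => rfl
  | some b => cases b <;> rfl

/-- If `f` is an MPH from an ortholattice to the two-element lattice, then so is `g(f)`,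
where `g(f)(a) = 0` if `f(a') = 1` and `g(f)(a) = 1` if `f(a') = 0`. -/
theorem gmap_is_mph {L : Type*} [Lattice L] [BoundedOrder L] (oc : L → L)
    (hoc : IsOrtho oc) (f : L → Option Bool) (hf : IsMPH f) :
    IsMPH (gmap oc f) := by
  obtain ⟨hfh, hfmax⟩ := hf
  refine ⟨gmap_hom oc hoc f hfh, ?_⟩
  intro h hh hext
  have hgh : IsPartialHom (gmap oc h) := gmap_hom oc hoc h hh
  have hext' : ∀ a : L, ∀ b : Bool, f a = some b → gmap oc h a = some b := by
    intro a b hab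
    rw [gmap_eq_some]
    apply hext
    rw [gmap_eq_some, hoc.1]
    simpa using hab
  have : gmap oc h = f := hfmax _ hgh hext'
  calc h = gmap oc (gmap oc h) := (gmap_gmap oc hoc.1 h).symm
    _ = gmap oc f := by rw [this]
end

section
/- Let L be an ortholattice with MPH dual (P_L, E) where (x,y) ∈ E iff x⁻¹(1) ∩ y⁻¹(0) = ∅, and let g be the dual orthocomplement map g(x)(a) = 1 iff x(a') = 0. Then for all x, y ∈ P_L: if xE ⊆ yE then Eg(x) ⊆ Eg(y). -/
theorem gmap_invol {L : Type*} (oc : L → L) (hinv : ∀ a, oc (oc a) = a)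
    (z : L → Option Bool) : gmap oc (gmap oc z) = z := by
  funext a
  simp [gmap, hinv, Option.map_map, Function.comp_def]

theorem gmap_partialHom {L : Type*} [Lattice L] [BoundedOrder L] (oc : L → L)
    (hoc : IsOrtho oc) (z : L → Option Bool) (hz : IsPartialHom z) :
    IsPartialHom (gmap oc z) := by
  obtain ⟨hinv, hbot, htop, hmeet, hjoin⟩ := hoc
  obtain ⟨ztop, zbot, zop⟩ := hz
  have octop : oc ⊤ = ⊥ := by have := hbot ⊤; simpa using this
  have ocbot : oc ⊥ = ⊤ := by have := htop ⊥; simpa using this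
  refine ⟨by simp [gmap, octop, zbot], by simp [gmap, ocbot, ztop], ?_⟩
  intro a b u v ha hb
  have hza : z (oc a) = some (!u) := by
    cases hc : z (oc a) with
    | none => simp [gmap, hc] at ha
    | some c => simp [gmap, hc] at ha; simp [← ha]
  have hzb : z (oc b) = some (!v) := by
    cases hc : z (oc b) with
    | none => simp [gmap, hc] at hb
    | some c => simp [gmap, hc] at hb; simp [← hb]
  obtain ⟨hm, hj⟩ := zop (oc a) (oc b) (!u) (!v) hza hzb
  constructor
  · have : gmap oc z (a ⊓ b) = Option.map (fun b => !b) (z (oc a ⊔ oc b)) := by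
      simp [gmap, hmeet]
    rw [this, hj]
    cases u <;> cases v <;> rfl
  · have : gmap oc z (a ⊔ b) = Option.map (fun b => !b) (z (oc a ⊓ oc b)) := by
      simp [gmap, hjoin]
    rw [this, hm]
    cases u <;> cases v <;> rfl

theorem gmap_MPH {L : Type*} [Lattice L] [BoundedOrder L] (oc : L → L)
    (hoc : IsOrtho oc) (z : L → Option Bool) (hz : IsMPH z) : IsMPH (gmap oc z) := by
  refine ⟨gmap_partialHom oc hoc z hz.1, ?_⟩
  intro h hh hext
  have hext' : ∀ a : L, ∀ b : Bool, z a = some b → gmap oc h a = some b := by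
    intro a b hab
    have h1 : gmap oc z (oc a) = some (!b) := by simp [gmap, hoc.1, hab]
    have h2 := hext (oc a) (!b) h1
    simp [gmap, h2]
  have key := hz.2 (gmap oc h) (gmap_partialHom oc hoc h hh) hext'
  calc h = gmap oc (gmap oc h) := (gmap_invol oc hoc.1 h).symm
    _ = gmap oc z := by rw [key]

theorem erel_gmap_comm {L : Type*} (oc : L → L) (hinv : ∀ a, oc (oc a) = a)
    (x z : L → Option Bool) (h : Erel z (gmap oc x)) : Erel x (gmap oc z) := by
  rintro a ⟨hx1, hgz⟩
  have hz1 : z (oc a) = some true := by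
    cases hc : z (oc a) with
    | none => simp [gmap, hc] at hgz
    | some c => simp [gmap, hc] at hgz; simp [hgz]
  exact h (oc a) ⟨hz1, by simp [gmap, hinv, hx1]⟩

/-- Condition (M2) for the dual of an ortholattice:
if `xE ⊆ yE` (within the set of MPHs) then `Eg(x) ⊆ Eg(y)`. -/
theorem gmap_M2 {L : Type*} [Lattice L] [BoundedOrder L] (oc : L → L)
    (hoc : IsOrtho oc) (x y : L → Option Bool) (hx : IsMPH x) (hy : IsMPH y)
    (hxy : ∀ z : L → Option Bool, IsMPH z → Erel x z → Erel y z) :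
    ∀ z : L → Option Bool, IsMPH z → Erel z (gmap oc x) → Erel z (gmap oc y) := by
  intro z hz hzgx
  exact erel_gmap_comm oc hoc.1 z y
    (hxy (gmap oc z) (gmap_MPH oc hoc z hz) (erel_gmap_comm oc hoc.1 x z hzgx))
end

section
/- Let L be an ortholattice with MPH dual (P_L, E) and dual orthocomplement map g as above. Then for every x ∈ P_L there exists y ∈ P_L such that yE ⊆ xE and Ey ⊆ Eg(x). -/
open Classical in
noncomputable def pairFun {L : Type*} (F I : Set L) : L → Option Bool :=
  fun a => if a ∈ F then some true else if a ∈ I then some false else none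

lemma pairFun_of_mem_F {L : Type*} {F I : Set L} {a : L} (h : a ∈ F) :
    pairFun F I a = some true := by simp [pairFun, h]

lemma pairFun_of_mem_I {L : Type*} {F I : Set L} {a : L} (h : a ∈ I) (h2 : a ∉ F) :
    pairFun F I a = some false := by simp [pairFun, h, h2]

lemma mdfip_exists {L : Type*} [Lattice L] {F₀ I₀ : Set L}
    (hF : IsLatFilter F₀) (hI : IsLatIdeal I₀) (hd : F₀ ∩ I₀ = ∅) :
    ∃ F I : Set L, IsMDFIP F I ∧ F₀ ⊆ F ∧ I₀ ⊆ I := by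
  set s : Set (Set L × Set L) :=
    {p | IsLatFilter p.1 ∧ IsLatIdeal p.2 ∧ p.1 ∩ p.2 = ∅ ∧ F₀ ⊆ p.1 ∧ I₀ ⊆ p.2} with hs
  have hchain : ∀ c ⊆ s, IsChain (· ≤ ·) c → ∃ ub ∈ s, ∀ z ∈ c, z ≤ ub := ?_
  · obtain ⟨m, hm⟩ := zorn_le₀ s hchain
    refine ⟨m.1, m.2, ⟨hm.prop.1, hm.prop.2.1, hm.prop.2.2.1, ?_⟩,
        hm.prop.2.2.2.1, hm.prop.2.2.2.2⟩
    intro G J hG hJ hGJ hFG hIJ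
    have h1 : (G, J) ∈ s := ⟨hG, hJ, hGJ, hm.prop.2.2.2.1.trans hFG, hm.prop.2.2.2.2.trans hIJ⟩
    have h2 : m ≤ (G, J) := ⟨hFG, hIJ⟩
    have h3 := hm.le_of_ge h1 h2
    exact ⟨le_antisymm h3.1 hFG, le_antisymm h3.2 hIJ⟩
  · intro c hc hchain
    rcases c.eq_empty_or_nonempty with rfl | hne
    · exact ⟨(F₀, I₀), ⟨hF, hI, hd, le_refl _, le_refl _⟩, by simp⟩
    · obtain ⟨p₀, hp₀⟩ := hne
      refine ⟨(⋃ p ∈ c, p.1, ⋃ p ∈ c, p.2), ⟨?_, ?_, ?_, ?_, ?_⟩, ?_⟩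
      · refine ⟨?_, ?_, ?_⟩
        · obtain ⟨a, ha⟩ := (hc hp₀).1.1
          exact ⟨a, Set.mem_biUnion hp₀ ha⟩
        · rintro a b ha hab
          simp only [Set.mem_iUnion] at ha ⊢
          obtain ⟨p, hp, hap⟩ := ha
          exact ⟨p, hp, (hc hp).1.2.1 a b hap hab⟩
        · rintro a b ha hb
          simp only [Set.mem_iUnion] at ha hb ⊢
          obtain ⟨p, hp, hap⟩ := ha
          obtain ⟨q, hq, hbq⟩ := hb
          rcases hchain.total hp hq with h | h
          · exact ⟨q, hq, (hc hq).1.2.2 a b (h.1 hap) hbq⟩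
          · exact ⟨p, hp, (hc hp).1.2.2 a b hap (h.1 hbq)⟩
      · refine ⟨?_, ?_, ?_⟩
        · obtain ⟨a, ha⟩ := (hc hp₀).2.1.1
          exact ⟨a, Set.mem_biUnion hp₀ ha⟩
        · rintro a b ha hab
          simp only [Set.mem_iUnion] at ha ⊢
          obtain ⟨p, hp, hap⟩ := ha
          exact ⟨p, hp, (hc hp).2.1.2.1 a b hap hab⟩
        · rintro a b ha hb
          simp only [Set.mem_iUnion] at ha hb ⊢
          obtain ⟨p, hp, hap⟩ := ha
          obtain ⟨q, hq, hbq⟩ := hb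
          rcases hchain.total hp hq with h | h
          · exact ⟨q, hq, (hc hq).2.1.2.2 a b (h.2 hap) hbq⟩
          · exact ⟨p, hp, (hc hp).2.1.2.2 a b hap (h.2 hbq)⟩
      · apply Set.eq_empty_iff_forall_notMem.mpr
        rintro a ⟨ha1, ha2⟩
        simp only [Set.mem_iUnion] at ha1 ha2
        obtain ⟨p, hp, hap⟩ := ha1
        obtain ⟨q, hq, haq⟩ := ha2
        rcases hchain.total hp hq with h | h
        · exact Set.eq_empty_iff_forall_notMem.mp (hc hq).2.2.1 a ⟨h.1 hap, haq⟩
        · exact Set.eq_empty_iff_forall_notMem.mp (hc hp).2.2.1 a ⟨hap, h.2 haq⟩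
      · exact (hc hp₀).2.2.2.1.trans (fun a ha => Set.mem_biUnion hp₀ ha)
      · exact (hc hp₀).2.2.2.2.trans (fun a ha => Set.mem_biUnion hp₀ ha)
      · intro p hp
        exact ⟨fun a ha => Set.mem_biUnion hp ha, fun a ha => Set.mem_biUnion hp ha⟩

lemma mdfip_mph {L : Type*} [Lattice L] [BoundedOrder L] {F I : Set L}
    (h : IsMDFIP F I) : IsMPH (pairFun F I) := by
  obtain ⟨hF, hI, hd, hmax⟩ := h
  have hdisj : ∀ a : L, a ∈ F → a ∈ I → False := fun a h1 h2 =>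
    Set.eq_empty_iff_forall_notMem.mp hd a ⟨h1, h2⟩
  have htop : (⊤ : L) ∈ F := by
    obtain ⟨a, ha⟩ := hF.1; exact hF.2.1 a ⊤ ha le_top
  have hbot : (⊥ : L) ∈ I := by
    obtain ⟨a, ha⟩ := hI.1; exact hI.2.1 a ⊥ ha bot_le
  have hmemF : ∀ a : L, pairFun F I a = some true ↔ a ∈ F := by
    intro a
    constructor
    · intro ha
      by_contra h
      unfold pairFun at ha
      split_ifs at ha <;> simp_all
    · exact pairFun_of_mem_F
  have hmemI : ∀ a : L, pairFun F I a = some false ↔ a ∈ I := by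
    intro a
    constructor
    · intro ha
      by_contra h
      unfold pairFun at ha
      split_ifs at ha <;> simp_all
    · intro ha
      exact pairFun_of_mem_I ha (fun h2 => hdisj a h2 ha)
  have hph : IsPartialHom (pairFun F I) := by
    refine ⟨pairFun_of_mem_F htop,
      pairFun_of_mem_I hbot (fun h2 => hdisj ⊥ h2 hbot), ?_⟩
    rintro a b (_|_) (_|_) ha hb
    · rw [hmemI] at ha hb
      constructor
      · exact (hmemI _).mpr (hI.2.1 a (a ⊓ b) ha inf_le_left)
      · exact (hmemI _).mpr (hI.2.2 a b ha hb)
    · rw [hmemI] at ha; rw [hmemF] at hb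
      constructor
      · exact (hmemI _).mpr (hI.2.1 a (a ⊓ b) ha inf_le_left)
      · exact (hmemF _).mpr (hF.2.1 b (a ⊔ b) hb le_sup_right)
    · rw [hmemF] at ha; rw [hmemI] at hb
      constructor
      · exact (hmemI _).mpr (hI.2.1 b (a ⊓ b) hb inf_le_right)
      · exact (hmemF _).mpr (hF.2.1 a (a ⊔ b) ha le_sup_left)
    · rw [hmemF] at ha hb
      constructor
      · exact (hmemF _).mpr (hF.2.2 a b ha hb)
      · exact (hmemF _).mpr (hF.2.1 a (a ⊔ b) ha le_sup_left)
  refine ⟨hph, ?_⟩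
  intro g hg hext
  set G : Set L := {c | ∃ a, g a = some true ∧ a ≤ c} with hGdef
  set J : Set L := {c | ∃ a, g a = some false ∧ c ≤ a} with hJdef
  have hGfil : IsLatFilter G := by
    refine ⟨⟨⊤, ⊤, hg.1, le_refl _⟩, ?_, ?_⟩
    · rintro a b ⟨c, hc, hca⟩ hab; exact ⟨c, hc, hca.trans hab⟩
    · rintro a b ⟨c, hc, hca⟩ ⟨d, hd, hdb⟩
      exact ⟨c ⊓ d, (hg.2.2 c d true true hc hd).1, inf_le_inf hca hdb⟩
  have hJid : IsLatIdeal J := by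
    refine ⟨⟨⊥, ⊥, hg.2.1, le_refl _⟩, ?_, ?_⟩
    · rintro a b ⟨c, hc, hca⟩ hab; exact ⟨c, hc, hab.trans hca⟩
    · rintro a b ⟨c, hc, hca⟩ ⟨d, hd, hdb⟩
      exact ⟨c ⊔ d, (hg.2.2 c d false false hc hd).2, sup_le_sup hca hdb⟩
  have hGJ : G ∩ J = ∅ := by
    apply Set.eq_empty_iff_forall_notMem.mpr
    rintro c ⟨⟨a, ha, hac⟩, ⟨b, hb, hcb⟩⟩
    have hab : a ≤ b := hac.trans hcb
    have := (hg.2.2 a b true false ha hb).2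
    rw [sup_eq_right.mpr hab, hb] at this
    simp at this
  have hFG : F ⊆ G := fun a ha => ⟨a, hext a true (pairFun_of_mem_F ha), le_refl a⟩
  have hIJ : I ⊆ J := fun a ha =>
    ⟨a, hext a false (pairFun_of_mem_I ha (fun h2 => hdisj a h2 ha)), le_refl a⟩
  obtain ⟨hGF, hJI⟩ := hmax G J hGfil hJid hGJ hFG hIJ
  funext a
  rcases hga : g a with _ | b
  · rcases hfa : pairFun F I a with _ | b
    · rfl
    · have := hext a b hfa; rw [hga] at this; exact this
  · rcases b with _ | _
    · have haJ : a ∈ J := ⟨a, hga, le_refl a⟩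
      rw [hJI] at haJ
      exact (pairFun_of_mem_I haJ (fun h2 => hdisj a h2 haJ)).symm
    · have haG : a ∈ G := ⟨a, hga, le_refl a⟩
      rw [hGF] at haG
      exact (pairFun_of_mem_F haG).symm

/-- Condition (O) for the dual of an ortholattice: for every MPH `x` there is an MPH `y`
with `yE ⊆ xE` and `Ey ⊆ Eg(x)`. -/
theorem gmap_O {L : Type*} [Lattice L] [BoundedOrder L] (oc : L → L)
    (hoc : IsOrtho oc) (x : L → Option Bool) (hx : IsMPH x) :
    ∃ y : L → Option Bool, IsMPH y ∧
      (∀ z : L → Option Bool, IsMPH z → Erel y z → Erel x z) ∧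
      (∀ z : L → Option Bool, IsMPH z → Erel z y → Erel z (gmap oc x)) := by
  obtain ⟨hxp, -⟩ := hx
  set F' : Set L := {c | ∃ a, x a = some true ∧ a ≤ c} with hF'def
  set I' : Set L := {c | ∃ a, x a = some true ∧ c ≤ oc a} with hI'def
  have hF' : IsLatFilter F' := by
    refine ⟨⟨⊤, ⊤, hxp.1, le_refl _⟩, ?_, ?_⟩
    · rintro a b ⟨c, hc, hca⟩ hab; exact ⟨c, hc, hca.trans hab⟩
    · rintro a b ⟨c, hc, hca⟩ ⟨d, hd, hdb⟩
      exact ⟨c ⊓ d, (hxp.2.2 c d true true hc hd).1, inf_le_inf hca hdb⟩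
  have hI' : IsLatIdeal I' := by
    refine ⟨⟨⊥, ⊤, hxp.1, bot_le⟩, ?_, ?_⟩
    · rintro a b ⟨c, hc, hca⟩ hab; exact ⟨c, hc, hab.trans hca⟩
    · rintro a b ⟨c, hc, hca⟩ ⟨d, hd, hdb⟩
      refine ⟨c ⊓ d, (hxp.2.2 c d true true hc hd).1, ?_⟩
      rw [hoc.2.2.2.1]
      exact sup_le_sup hca hdb
  have hd : F' ∩ I' = ∅ := by
    apply Set.eq_empty_iff_forall_notMem.mpr
    rintro c ⟨⟨a, ha, hac⟩, ⟨b, hb, hcb⟩⟩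
    have h1 : a ⊓ b ≤ b ⊓ oc b :=
      le_inf inf_le_right (le_trans (le_trans inf_le_left hac) hcb)
    rw [hoc.2.1 b] at h1
    have h2 : a ⊓ b = ⊥ := le_bot_iff.mp h1
    have h3 := (hxp.2.2 a b true true ha hb).1
    rw [h2, hxp.2.1] at h3
    simp at h3
  obtain ⟨F, I, hFI, hF'F, hI'I⟩ := mdfip_exists hF' hI' hd
  have hdisj : ∀ a : L, a ∈ F → a ∈ I → False := fun a h1 h2 =>
    Set.eq_empty_iff_forall_notMem.mp hFI.2.2.1 a ⟨h1, h2⟩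
  refine ⟨pairFun F I, mdfip_mph hFI, ?_, ?_⟩
  · rintro z hz hEyz a ⟨hxa, hza⟩
    exact hEyz a ⟨pairFun_of_mem_F (hF'F ⟨a, hxa, le_refl a⟩), hza⟩
  · rintro z hz hEzy a ⟨hza, hga⟩
    have hxoc : x (oc a) = some true := by
      unfold gmap at hga
      rcases h : x (oc a) with _ | (_ | _)
      · rw [h] at hga; simp at hga
      · rw [h] at hga; simp at hga
      · rfl
    have haI : a ∈ I := hI'I ⟨oc a, hxoc, le_of_eq (hoc.1 a).symm⟩
    exact hEzy a ⟨hza, pairFun_of_mem_I haI (fun h2 => hdisj a h2 haI)⟩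
end

section
/- Let L be a bounded lattice and (P_L, E) its dual digraph of MPHs with the Plo\u0161\u010dica relation. Then for any x, y ∈ P_L: (i) xE ⊆ yE if and only if y⁻¹(1) ⊆ x⁻¹(1); and (ii) Ex ⊆ Ey if and only if y⁻¹(0) ⊆ x⁻¹(0). -/
section Aux

variable {L : Type*} [Lattice L] [BoundedOrder L]

lemma aux_mono {f : L → Option Bool} (hf : IsPartialHom f) {a b : L} {u v : Bool}
    (ha : f a = some u) (hb : f b = some v) (hab : a ≤ b) : u ≤ v := by
  have h := (hf.2.2 a b u v ha hb).1
  rw [inf_eq_left.mpr hab, ha] at h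
  have h2 : u = (u && v) := Option.some.inj h
  cases u <;> cases v
  · exact le_refl _
  · exact Bool.false_le _
  · exact absurd h2 (by decide)
  · exact le_refl _

/-- Zorn: every disjoint filter-ideal pair extends to a maximal one. -/
lemma exists_mdfip {F I : Set L} (hF : IsLatFilter F) (hI : IsLatIdeal I)
    (hd : F ∩ I = ∅) : ∃ G J : Set L, IsMDFIP G J ∧ F ⊆ G ∧ I ⊆ J := by
  classical
  set S : Set (Set L × Set L) :=
    {p | IsLatFilter p.1 ∧ IsLatIdeal p.2 ∧ p.1 ∩ p.2 = ∅} with hS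
  have hub : ∀ c ⊆ S, IsChain (· ≤ ·) c → ∀ p0 ∈ c,
      ∃ ub ∈ S, ∀ z ∈ c, z ≤ ub := by
    intro c hcS hc p0 hp0
    refine ⟨(⋃ p ∈ c, p.1, ⋃ p ∈ c, p.2), ⟨?_, ?_, ?_⟩, ?_⟩
    · refine ⟨?_, ?_, ?_⟩
      · obtain ⟨t, ht⟩ := (hcS hp0).1.1
        exact ⟨t, Set.mem_biUnion hp0 ht⟩
      · rintro a b ha hab
        obtain ⟨p, hp, hap⟩ := Set.mem_iUnion₂.mp ha
        exact Set.mem_biUnion hp ((hcS hp).1.2.1 a b hap hab)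
      · rintro a b ha hb
        obtain ⟨p, hp, hap⟩ := Set.mem_iUnion₂.mp ha
        obtain ⟨q, hq, hbq⟩ := Set.mem_iUnion₂.mp hb
        rcases hc.total hp hq with h | h
        · exact Set.mem_biUnion hq ((hcS hq).1.2.2 a b (h.1 hap) hbq)
        · exact Set.mem_biUnion hp ((hcS hp).1.2.2 a b hap (h.1 hbq))
    · refine ⟨?_, ?_, ?_⟩
      · obtain ⟨t, ht⟩ := (hcS hp0).2.1.1
        exact ⟨t, Set.mem_biUnion hp0 ht⟩
      · rintro a b ha hab
        obtain ⟨p, hp, hap⟩ := Set.mem_iUnion₂.mp ha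
        exact Set.mem_biUnion hp ((hcS hp).2.1.2.1 a b hap hab)
      · rintro a b ha hb
        obtain ⟨p, hp, hap⟩ := Set.mem_iUnion₂.mp ha
        obtain ⟨q, hq, hbq⟩ := Set.mem_iUnion₂.mp hb
        rcases hc.total hp hq with h | h
        · exact Set.mem_biUnion hq ((hcS hq).2.1.2.2 a b (h.2 hap) hbq)
        · exact Set.mem_biUnion hp ((hcS hp).2.1.2.2 a b hap (h.2 hbq))
    · ext a
      simp only [Set.mem_inter_iff, Set.mem_iUnion₂, Set.mem_empty_iff_false, iff_false]
      rintro ⟨⟨p, hp, hap⟩, ⟨q, hq, haq⟩⟩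
      rcases hc.total hp hq with h | h
      · have := (hcS hq).2.2
        have : a ∈ q.1 ∩ q.2 := ⟨h.1 hap, haq⟩
        simp_all
      · have := (hcS hp).2.2
        have : a ∈ p.1 ∩ p.2 := ⟨hap, h.2 haq⟩
        simp_all
    · intro p hp
      exact ⟨fun a ha => Set.mem_biUnion hp ha, fun a ha => Set.mem_biUnion hp ha⟩
  obtain ⟨m, hm1, hm2⟩ := zorn_le_nonempty₀ S hub (F, I) ⟨hF, hI, hd⟩
  refine ⟨m.1, m.2, ⟨hm2.1.1, hm2.1.2.1, hm2.1.2.2, ?_⟩, hm1.1, hm1.2⟩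
  intro G J hG hJ hGJ h1 h2
  have hle : (G, J) ≤ m := hm2.2 (y := (G, J)) ⟨hG, hJ, hGJ⟩ ⟨h1, h2⟩
  exact ⟨le_antisymm hle.1 h1, le_antisymm hle.2 h2⟩

end Aux

section Aux2
variable {L : Type*} [Lattice L] [BoundedOrder L]

open Classical in
noncomputable def pairMap (F I : Set L) : L → Option Bool :=
  fun b => if b ∈ F then some true else if b ∈ I then some false else none

lemma pairMap_true {F I : Set L} {b : L} :
    pairMap F I b = some true ↔ b ∈ F := by
  unfold pairMap; split <;> simp_all

lemma pairMap_false {F I : Set L} {b : L} (hd : F ∩ I = ∅) :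
    pairMap F I b = some false ↔ b ∈ I := by
  have hdis : ∀ a : L, a ∈ F → a ∈ I → False := by
    intro a h1 h2
    have : a ∈ F ∩ I := ⟨h1, h2⟩
    simp [hd] at this
  unfold pairMap; split <;> rename_i h
  · simp only [Option.some.injEq]
    constructor
    · intro hc; exact absurd hc (by decide)
    · intro hb; exact absurd (hdis b h hb) (fun x => x)
  · split <;> simp_all

lemma pairMap_phom {F I : Set L} (hF : IsLatFilter F) (hI : IsLatIdeal I)
    (hd : F ∩ I = ∅) : IsPartialHom (pairMap F I) := by
  have hdis : ∀ a : L, a ∈ F → a ∈ I → False := by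
    intro a h1 h2
    have : a ∈ F ∩ I := ⟨h1, h2⟩
    simp [hd] at this
  have htop : (⊤ : L) ∈ F := by
    obtain ⟨t, ht⟩ := hF.1; exact hF.2.1 t ⊤ ht le_top
  have hbot : (⊥ : L) ∈ I := by
    obtain ⟨t, ht⟩ := hI.1; exact hI.2.1 t ⊥ ht bot_le
  refine ⟨pairMap_true.mpr htop, (pairMap_false hd).mpr hbot, ?_⟩
  intro a b u v ha hb
  have key : ∀ w : L, (w ∈ F → pairMap F I w = some true) ∧
      (w ∈ I → pairMap F I w = some false) :=
    fun w => ⟨fun h => pairMap_true.mpr h, fun h => (pairMap_false hd).mpr h⟩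
  have hcase : ∀ w : L, ∀ u : Bool, pairMap F I w = some u →
      (u = true ∧ w ∈ F) ∨ (u = false ∧ w ∈ I) := by
    intro w u hw
    by_cases h1 : w ∈ F
    · left; exact ⟨by rw [pairMap_true.mpr h1] at hw; exact (Option.some.inj hw).symm, h1⟩
    · by_cases h2 : w ∈ I
      · right; exact ⟨by rw [(pairMap_false hd).mpr h2] at hw; exact (Option.some.inj hw).symm, h2⟩
      · exfalso; unfold pairMap at hw; simp [h1, h2] at hw
  rcases hcase a u ha with ⟨rfl, haF⟩ | ⟨rfl, haI⟩ <;>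
    rcases hcase b v hb with ⟨rfl, hbF⟩ | ⟨rfl, hbI⟩
  · exact ⟨pairMap_true.mpr (hF.2.2 a b haF hbF),
      pairMap_true.mpr (hF.2.1 a (a ⊔ b) haF le_sup_left)⟩
  · exact ⟨(pairMap_false hd).mpr (hI.2.1 b (a ⊓ b) hbI inf_le_right),
      pairMap_true.mpr (hF.2.1 a (a ⊔ b) haF le_sup_left)⟩
  · exact ⟨(pairMap_false hd).mpr (hI.2.1 a (a ⊓ b) haI inf_le_left),
      pairMap_true.mpr (hF.2.1 b (a ⊔ b) hbF le_sup_right)⟩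
  · exact ⟨(pairMap_false hd).mpr (hI.2.1 a (a ⊓ b) haI inf_le_left),
      (pairMap_false hd).mpr (hI.2.2 a b haI hbI)⟩

lemma pairMap_mph {F I : Set L} (h : IsMDFIP F I) : IsMPH (pairMap F I) := by
  obtain ⟨hF, hI, hd, hmax⟩ := h
  refine ⟨pairMap_phom hF hI hd, ?_⟩
  intro h hph hext
  have hext' : ∀ a : L, a ∈ F → h a = some true := by
    intro a ha; exact hext a true (pairMap_true.mpr ha)
  have hext'' : ∀ a : L, a ∈ I → h a = some false := by
    intro a ha; exact hext a false ((pairMap_false hd).mpr ha)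
  obtain ⟨f0, hf0⟩ := hF.1
  obtain ⟨i0, hi0⟩ := hI.1
  have htrue : ∀ b : L, h b = some true → b ∈ F := by
    intro b hb
    set G : Set L := {c | ∃ f ∈ F, f ⊓ b ≤ c} with hG
    have hGF : IsLatFilter G := by
      refine ⟨⟨b, f0, hf0, inf_le_right⟩, ?_, ?_⟩
      · rintro c d ⟨f, hf, hfc⟩ hcd; exact ⟨f, hf, hfc.trans hcd⟩
      · rintro c d ⟨f, hf, hfc⟩ ⟨g, hg, hgd⟩
        exact ⟨f ⊓ g, hF.2.2 f g hf hg, by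
          calc f ⊓ g ⊓ b ≤ (f ⊓ b) ⊓ (g ⊓ b) := by
                simp only [le_inf_iff]
                exact ⟨⟨inf_le_left.trans inf_le_left, inf_le_right⟩,
                  ⟨inf_le_left.trans inf_le_right, inf_le_right⟩⟩
            _ ≤ c ⊓ d := inf_le_inf hfc hgd⟩
    have hGd : G ∩ I = ∅ := by
      ext c
      simp only [Set.mem_inter_iff, Set.mem_empty_iff_false, iff_false]
      rintro ⟨⟨f, hf, hfc⟩, hcI⟩
      have h1 : h f = some true := hext' f hf
      have h2 : h (f ⊓ b) = some (true && true) := (hph.2.2 f b true true h1 hb).1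
      have h3 : h c = some false := hext'' c hcI
      exact absurd (aux_mono hph h2 h3 hfc) (by decide)
    have hFG : F ⊆ G := fun f hf => ⟨f, hf, inf_le_left⟩
    have := (hmax G I hGF hI hGd hFG (subset_refl I)).1
    rw [← this]
    exact ⟨f0, hf0, inf_le_right⟩
  have hfalse : ∀ b : L, h b = some false → b ∈ I := by
    intro b hb
    set J : Set L := {c | ∃ i ∈ I, c ≤ i ⊔ b} with hJ
    have hJI : IsLatIdeal J := by
      refine ⟨⟨b, i0, hi0, le_sup_right⟩, ?_, ?_⟩
      · rintro c d ⟨i, hi, hci⟩ hdc; exact ⟨i, hi, hdc.trans hci⟩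
      · rintro c d ⟨i, hi, hci⟩ ⟨j, hj, hdj⟩
        exact ⟨i ⊔ j, hI.2.2 i j hi hj, by
          calc c ⊔ d ≤ (i ⊔ b) ⊔ (j ⊔ b) := sup_le_sup hci hdj
            _ ≤ i ⊔ j ⊔ b := by
                simp only [sup_le_iff]
                exact ⟨⟨le_sup_left.trans le_sup_left, le_sup_right⟩,
                  ⟨le_sup_right.trans le_sup_left, le_sup_right⟩⟩⟩
    have hJd : F ∩ J = ∅ := by
      ext c
      simp only [Set.mem_inter_iff, Set.mem_empty_iff_false, iff_false]
      rintro ⟨hcF, ⟨i, hi, hci⟩⟩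
      have h1 : h i = some false := hext'' i hi
      have h2 : h (i ⊔ b) = some (false || false) := (hph.2.2 i b false false h1 hb).2
      have h3 : h c = some true := hext' c hcF
      exact absurd (aux_mono hph h3 h2 hci) (by decide)
    have hIJ : I ⊆ J := fun i hi => ⟨i, hi, le_sup_left⟩
    have := (hmax F J hF hJI hJd (subset_refl F) hIJ).2
    rw [← this]
    exact ⟨i0, hi0, le_sup_right⟩
  funext b
  rcases hhb : h b with _ | u
  · rcases hzb : pairMap F I b with _ | v
    · rfl
    · have h5 := hext b v hzb
      rw [hhb] at h5
      exact absurd h5 (by simp)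
  · cases u
    · exact ((pairMap_false hd).mpr (hfalse b hhb)).symm
    · exact (pairMap_true.mpr (htrue b hhb)).symm

end Aux2

section Aux3
variable {L : Type*} [Lattice L] [BoundedOrder L]

lemma mph_mdfip {x : L → Option Bool} (hx : IsMPH x) :
    IsMDFIP {a : L | x a = some true} {a : L | x a = some false} := by
  obtain ⟨hph, hmax⟩ := hx
  set F0 : Set L := {c | ∃ f, x f = some true ∧ f ≤ c} with hF0
  set I0 : Set L := {c | ∃ i, x i = some false ∧ c ≤ i} with hI0
  have hF0f : IsLatFilter F0 := by
    refine ⟨⟨⊤, ⊤, hph.1, le_refl _⟩, ?_, ?_⟩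
    · rintro a b ⟨f, hf, hfa⟩ hab; exact ⟨f, hf, hfa.trans hab⟩
    · rintro a b ⟨f, hf, hfa⟩ ⟨g, hg, hgb⟩
      refine ⟨f ⊓ g, ?_, inf_le_inf hfa hgb⟩
      have := (hph.2.2 f g true true hf hg).1
      simpa using this
  have hI0i : IsLatIdeal I0 := by
    refine ⟨⟨⊥, ⊥, hph.2.1, le_refl _⟩, ?_, ?_⟩
    · rintro a b ⟨i, hi, hai⟩ hba; exact ⟨i, hi, hba.trans hai⟩
    · rintro a b ⟨i, hi, hai⟩ ⟨j, hj, hbj⟩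
      refine ⟨i ⊔ j, ?_, sup_le_sup hai hbj⟩
      have := (hph.2.2 i j false false hi hj).2
      simpa using this
  have hd0 : F0 ∩ I0 = ∅ := by
    ext c
    simp only [Set.mem_inter_iff, Set.mem_empty_iff_false, iff_false]
    rintro ⟨⟨f, hf, hfc⟩, ⟨i, hi, hci⟩⟩
    exact absurd (aux_mono hph hf hi (hfc.trans hci)) (by decide)
  obtain ⟨G, J, hGJ, hFG, hIJ⟩ := exists_mdfip hF0f hI0i hd0
  have hz := pairMap_mph hGJ
  have hzx : pairMap G J = x := by
    apply hmax _ hz.1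
    intro a b hab
    cases b
    · exact (pairMap_false hGJ.2.2.1).mpr (hIJ ⟨a, hab, le_refl _⟩)
    · exact pairMap_true.mpr (hFG ⟨a, hab, le_refl _⟩)
  have e1 : {a : L | x a = some true} = G := by
    ext a
    rw [Set.mem_setOf_eq, ← hzx, pairMap_true]
  have e2 : {a : L | x a = some false} = J := by
    ext a
    rw [Set.mem_setOf_eq, ← hzx, pairMap_false hGJ.2.2.1]
  rw [e1, e2]
  exact hGJ

end Aux3

/-- For MPHs `x, y` of a bounded lattice: `xE ⊆ yE` iff `y⁻¹(1) ⊆ x⁻¹(1)`,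
and `Ex ⊆ Ey` iff `y⁻¹(0) ⊆ x⁻¹(0)`. -/
theorem dual_digraph_forth_back {L : Type*} [Lattice L] [BoundedOrder L]
    (x y : L → Option Bool) (hx : IsMPH x) (hy : IsMPH y) :
    ((∀ z : L → Option Bool, IsMPH z → Erel x z → Erel y z) ↔
      {a : L | y a = some true} ⊆ {a : L | x a = some true}) ∧
    ((∀ z : L → Option Bool, IsMPH z → Erel z x → Erel z y) ↔
      {a : L | y a = some false} ⊆ {a : L | x a = some false}) := by
  obtain ⟨hxF, hxI, hxd, _⟩ := mph_mdfip hx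
  constructor
  · constructor
    · -- forward: xE ⊆ yE → y⁻¹(1) ⊆ x⁻¹(1)
      intro H a hya
      simp only [Set.mem_setOf_eq] at hya ⊢
      by_contra hxa
      -- seed pair (x⁻¹(1), ↓a)
      have hIa : IsLatIdeal {c : L | c ≤ a} :=
        ⟨⟨a, le_refl _⟩, fun c d hc hdc => hdc.trans hc, fun c d hc hd => sup_le hc hd⟩
      have hda : {b : L | x b = some true} ∩ {c : L | c ≤ a} = ∅ := by
        ext c
        simp only [Set.mem_inter_iff, Set.mem_setOf_eq, Set.mem_empty_iff_false, iff_false]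
        rintro ⟨hc1, hc2⟩
        exact hxa (hxF.2.1 c a hc1 hc2)
      obtain ⟨G, J, hGJ, hFG, hIJ⟩ := exists_mdfip hxF hIa hda
      have hz := pairMap_mph hGJ
      have hxz : Erel x (pairMap G J) := by
        rintro b ⟨hb1, hb2⟩
        have hbG : b ∈ G := hFG hb1
        have hbJ : b ∈ J := (pairMap_false hGJ.2.2.1).mp hb2
        have : b ∈ G ∩ J := ⟨hbG, hbJ⟩
        rw [hGJ.2.2.1] at this
        exact this
      have hyz := H _ hz hxz
      exact hyz a ⟨hya, (pairMap_false hGJ.2.2.1).mpr (hIJ (le_refl a))⟩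
    · -- backward
      intro hsub z hz hxz b hb
      exact hxz b ⟨hsub hb.1, hb.2⟩
  · constructor
    · intro H a hya
      simp only [Set.mem_setOf_eq] at hya ⊢
      by_contra hxa
      have hFa : IsLatFilter {c : L | a ≤ c} :=
        ⟨⟨a, le_refl _⟩, fun c d hc hcd => hc.trans hcd, fun c d hc hd => le_inf hc hd⟩
      have hda : {c : L | a ≤ c} ∩ {b : L | x b = some false} = ∅ := by
        ext c
        simp only [Set.mem_inter_iff, Set.mem_setOf_eq, Set.mem_empty_iff_false, iff_false]
        rintro ⟨hc1, hc2⟩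
        exact hxa (hxI.2.1 c a hc2 hc1)
      obtain ⟨G, J, hGJ, hFG, hIJ⟩ := exists_mdfip hFa hxI hda
      have hz := pairMap_mph hGJ
      have hzx : Erel (pairMap G J) x := by
        rintro b ⟨hb1, hb2⟩
        have hbG : b ∈ G := pairMap_true.mp hb1
        have hbJ : b ∈ J := hIJ hb2
        have : b ∈ G ∩ J := ⟨hbG, hbJ⟩
        rw [hGJ.2.2.1] at this
        exact this
      have hzy := H _ hz hzx
      exact hzy a ⟨pairMap_true.mpr (hFG (le_refl a)), hya⟩
    · intro hsub z hz hzx b hb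
      exact hzx b ⟨hb.1, hsub hb.2⟩
end

section
/- Let (X, E) be a digraph in which every pair (x,y) ∉ E is separated: there exists a maximal partial E-preserving map φ into ({0,1},≤) with φ(x) = 1 and φ(y) = 0 (the (TED) condition). Then the space is doubly disconnected: (a) if yE ⊄ xE there exists such a φ with φ(x) = 1 and φ(y) ≠ 1; (b) if Ey ⊄ Ex there exists such a φ with φ(x) = 0 and φ(y) ≠ 0. -/
/-- A partial map `φ : X ⇀ Bool` preserves the digraph relation `E`. -/
def PreservesE {X : Type*} (E : X → X → Prop) (φ : X → Option Bool) : Prop :=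
  ∀ x y : X, ∀ a b : Bool, E x y → φ x = some a → φ y = some b → a ≤ b

/-- A maximal partial `E`-preserving map into `({0,1}, ≤)`. -/
def IsMPE {X : Type*} (E : X → X → Prop) (φ : X → Option Bool) : Prop :=
  PreservesE E φ ∧
  ∀ ψ : X → Option Bool, PreservesE E ψ → (∀ x : X, ∀ b : Bool, φ x = some b → ψ x = some b) → ψ = φ

/-- The condition (TED) implies double disconnectedness. -/
theorem ted_implies_doubly_disconnected {X : Type*} (E : X → X → Prop)
    (hTED : ∀ x y : X, ¬ E x y →
      ∃ φ : X → Option Bool, IsMPE E φ ∧ φ x = some true ∧ φ y = some false) :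
    (∀ x y : X, ¬ ({z : X | E y z} ⊆ {z : X | E x z}) →
      ∃ φ : X → Option Bool, IsMPE E φ ∧ φ x = some true ∧ φ y ≠ some true) ∧
    (∀ x y : X, ¬ ({z : X | E z y} ⊆ {z : X | E z x}) →
      ∃ φ : X → Option Bool, IsMPE E φ ∧ φ x = some false ∧ φ y ≠ some false) := by
  constructor
  · intro x y h
    rw [Set.not_subset] at h
    obtain ⟨z, hyz, hxz⟩ := h
    obtain ⟨φ, hφ, hx, hz⟩ := hTED x z hxz
    refine ⟨φ, hφ, hx, fun hy => ?_⟩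
    have := hφ.1 y z true false hyz hy hz
    exact absurd this (by decide)
  · intro x y h
    rw [Set.not_subset] at h
    obtain ⟨z, hzy, hzx⟩ := h
    obtain ⟨φ, hφ, hz, hx⟩ := hTED z x hzx
    refine ⟨φ, hφ, hx, fun hy => ?_⟩
    have := hφ.1 z y true false hzy hz hy
    exact absurd this (by decide)
end

section
/- Let (X, E, g) be as in an ortho-Plo\u0161\u010dica space (g involutive, satisfying (M2), (M3), (O), with E reflexive and satisfying (Ti)). For maximal partial E-preserving maps φ, ψ into ({0,1},≤) with φ⁻¹(1) ⊆ ψ⁻¹(1), the negation operation ¬ defined by (¬φ)(x) = 1 iff φ(g(x)) = 0 and (¬φ)(x) = 0 iff φ(g(x)) = 1 is order-reversing: (¬ψ)⁻¹(1) ⊆ (¬φ)⁻¹(1). -/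
/-- The negation of a maximal partial `E`-preserving map. -/
def negMap {X : Type*} (g : X → X) (φ : X → Option Bool) : X → Option Bool :=
  fun x => Option.map (fun b => !b) (φ (g x))

/-- In an ortho-Ploščica-type structure, the negation `¬` is order-reversing. -/
theorem neg_order_reversing {X : Type*} (E : X → X → Prop) (g : X → X)
    (hrefl : ∀ x : X, E x x)
    (hg : ∀ x : X, g (g x) = x)
    (hM2 : ∀ x y : X, {z : X | E x z} ⊆ {z : X | E y z} →
      {z : X | E z (g x)} ⊆ {z : X | E z (g y)})
    (hM3 : ∀ x y : X, {z : X | E z x} ⊆ {z : X | E z y} →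
      {z : X | E (g x) z} ⊆ {z : X | E (g y) z})
    (hO : ∀ x : X, ∃ y : X, {z : X | E y z} ⊆ {z : X | E x z} ∧
      {z : X | E z y} ⊆ {z : X | E z (g x)})
    (hTi : ∀ x y : X, E x y →
      ∃ z : X, {w : X | E z w} ⊆ {w : X | E x w} ∧ {w : X | E w z} ⊆ {w : X | E w y})
    (φ ψ : X → Option Bool) (hφ : IsMPE E φ) (hψ : IsMPE E ψ)
    (hle : {x : X | φ x = some true} ⊆ {x : X | ψ x = some true}) :
    {x : X | negMap g ψ x = some true} ⊆ {x : X | negMap g φ x = some true} := by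
  classical
  -- It suffices to show ψ⁻¹(false) ⊆ φ⁻¹(false).
  have key : ∀ x : X, ψ x = some false → φ x = some false := by
    intro x hx
    rcases h : φ x with _ | b
    · -- φ x = none: extend φ at x by false, contradicting maximality
      exfalso
      set φ' : X → Option Bool := fun y => if y = x then some false else φ y with hφ'
      have hpres : PreservesE E φ' := by
        intro y z a b hE hy hz
        by_cases hyx : y = x
        · simp [φ', hyx] at hy
          subst hy
          exact Bool.false_le b
        · by_cases hzx : z = x
          · simp [φ', hyx, hzx] at hy hz
            subst hz
            -- need a ≤ false, i.e. φ y ≠ some true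
            cases a with
            | false => exact le_refl _
            | true =>
              have hyT : ψ y = some true := hle hy
              have := hψ.1 y x true false (hzx ▸ hE) hyT hx
              simpa using this
          · simp [φ', hyx, hzx] at hy hz
            exact hφ.1 y z a b hE hy hz
      have hext : ∀ y : X, ∀ b : Bool, φ y = some b → φ' y = some b := by
        intro y b hy
        by_cases hyx : y = x
        · rw [hyx] at hy; rw [h] at hy; exact absurd hy (by simp)
        · simp [φ', hyx, hy]
      have := hφ.2 φ' hpres hext
      have hx' : φ' x = some false := by simp [φ']
      rw [this] at hx'
      rw [h] at hx'
      exact absurd hx' (by simp)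
    · cases b with
      | false => rfl
      | true =>
        have := hle h
        simp only [Set.mem_setOf_eq] at this
        rw [hx] at this
        exact absurd this (by simp)
  intro x hx
  simp only [Set.mem_setOf_eq, negMap, Option.map_eq_some_iff] at hx ⊢
  rcases hx with ⟨b, hb, hb'⟩
  have : b = false := by cases b <;> simp_all
  subst this
  exact ⟨false, key _ hb, rfl⟩
end

section
/- Let (X, E, g) satisfy: E reflexive, g : X → X with (O): for every y there exists w with wE ⊆ yE and Ew ⊆ Eg(y). Let φ be a maximal partial E-preserving map into ({0,1},≤). Then there is no y ∈ X with φ(g(y)) = 0 and φ(y) = 1; consequently (¬φ)⁻¹(1) ∩ φ⁻¹(1) = ∅, i.e. ¬φ ∧ φ is the bottom element φ₀ of the lattice of maximal partial E-preserving maps. -/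
/-- Under reflexivity of `E` and condition (O), there is no `y` with `φ(g(y)) = 0`
and `φ(y) = 1`; consequently `(¬φ)⁻¹(1) ∩ φ⁻¹(1) = ∅`, i.e. `¬φ ∧ φ` is the bottom
element of the dual lattice. -/
theorem neg_meet_bottom {X : Type*} (E : X → X → Prop) (g : X → X)
    (hrefl : ∀ x : X, E x x)
    (hO : ∀ y : X, ∃ w : X, {z : X | E w z} ⊆ {z : X | E y z} ∧
      {z : X | E z w} ⊆ {z : X | E z (g y)})
    (φ : X → Option Bool) (hφ : IsMPE E φ) :
    (¬ ∃ y : X, φ (g y) = some false ∧ φ y = some true) ∧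
    {x : X | negMap g φ x = some true} ∩ {x : X | φ x = some true} = ∅ := by
  classical
  have key : ¬ ∃ y : X, φ (g y) = some false ∧ φ y = some true := by
    rintro ⟨y, hgy, hy⟩
    obtain ⟨w, hw1, hw2⟩ := hO y
    -- First: φ w = some true
    have hEyw : E y w := hw1 (hrefl w)
    have hEwgy : E w (g y) := hw2 (hrefl w)
    have hφw : φ w = some true := by
      cases hcase : φ w with
      | some b =>
        have hb := hφ.1 y w true b hEyw hy hcase
        cases b
        · exact absurd hb (by decide)
        · rfl
      | none =>
        exfalso
        set ψ : X → Option Bool := fun x => if x = w then some true else φ x with hψ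
        have hpres : PreservesE E ψ := by
          intro x z a b hxz hxa hzb
          by_cases hx : x = w <;> by_cases hz : z = w <;>
            simp [hψ, hx, hz] at hxa hzb
          · simp_all
          · subst hx
            subst hxa
            have hEyz : E y z := hw1 hxz
            have := hφ.1 y z true b hEyz hy hzb
            exact this
          · subst hzb; simp
          · exact hφ.1 x z a b hxz hxa hzb
        have hext : ∀ x : X, ∀ b : Bool, φ x = some b → ψ x = some b := by
          intro x b hx
          by_cases h : x = w
          · subst h; rw [hcase] at hx; exact absurd hx (by simp)
          · simp [hψ, h, hx]
        have := hφ.2 ψ hpres hext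
        have : ψ w = φ w := by rw [this]
        simp [hψ, hcase] at this
    have := hφ.1 w (g y) true false hEwgy hφw hgy
    exact absurd this (by decide)
  refine ⟨key, ?_⟩
  ext x
  simp only [Set.mem_inter_iff, Set.mem_setOf_eq, Set.mem_empty_iff_false, iff_false]
  rintro ⟨hneg, hx⟩
  apply key
  refine ⟨x, ?_, hx⟩
  unfold negMap at hneg
  cases h : φ (g x) with
  | none => rw [h] at hneg; simp at hneg
  | some b => rw [h] at hneg; simp at hneg; exact congrArg some hneg
end
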